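/- For every density matrix σ on ℂ² ⊗ ℂ², with x_{jk} = ⟨φʲ, σ φᵏ⟩, one has Tr((σ ⊗ σ)·L₃⁻) = Σ_{j=1}^{3} (x₀₀·x_{jj} − |x₀ⱼ|²). -/

import Mathlib

open Matrix
open scoped Matrix Kronecker ComplexOrder

noncomputable section

/-- Index type of `ℂ² ⊗ ℂ²`. -/
abbrev Q : Type := Fin 2 × Fin 2

/-- The standard basis vector `|ab⟩` of `ℂ² ⊗ ℂ²`. -/
def ket (a b : Fin 2) : Q → ℂ := fun p => if p = (a, b) then 1 else 0

/-- The Bell basis `φ⁰, φ¹, φ², φ³` of `ℂ² ⊗ ℂ²`. -/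
def bell : Fin 4 → Q → ℂ
  | 0 => fun p => (ket 0 0 p + ket 1 1 p) / (Real.sqrt 2 : ℂ)
  | 1 => fun p => Complex.I * (ket 0 1 p + ket 1 0 p) / (Real.sqrt 2 : ℂ)
  | 2 => fun p => (-ket 0 1 p + ket 1 0 p) / (Real.sqrt 2 : ℂ)
  | 3 => fun p => Complex.I * (ket 0 0 p - ket 1 1 p) / (Real.sqrt 2 : ℂ)

/-- The product basis `e^{jk} = φʲ ⊗ φᵏ` of `(ℂ²⊗ℂ²)⊗(ℂ²⊗ℂ²)`. -/
def e (j k : Fin 4) : Q × Q → ℂ := fun pq => bell j pq.1 * bell k pq.2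

/-- Rank-one operator `|v⟩⟨v|`. -/
def outer {m : Type*} (v : m → ℂ) : Matrix m m ℂ := vecMulVec v (star v)

/-- Orthogonal projection onto
`span{e^{jk}+e^{kj} : 1≤j<k≤3} ∪ {e^{11}−e^{22}, e^{22}−e^{33}}`. -/
def K5 : Matrix (Q × Q) (Q × Q) ℂ :=
  (1 / 2 : ℂ) • (outer (e 1 2 + e 2 1) + outer (e 2 3 + e 3 2) + outer (e 3 1 + e 1 3)) +
    (1 / 2 : ℂ) • outer (e 1 1 - e 2 2) +
    (1 / 6 : ℂ) • outer (e 1 1 + e 2 2 - (2 : ℂ) • e 3 3)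

/-- Orthogonal projection onto `span{e^{11}+e^{22}+e^{33}}`. -/
def K1 : Matrix (Q × Q) (Q × Q) ℂ :=
  (1 / 3 : ℂ) • outer (e 1 1 + e 2 2 + e 3 3)

/-- Orthogonal projection onto `span{e^{jk}−e^{kj} : 1≤j<k≤3}`. -/
def K3m : Matrix (Q × Q) (Q × Q) ℂ :=
  (1 / 2 : ℂ) • (outer (e 1 2 - e 2 1) + outer (e 2 3 - e 3 2) + outer (e 3 1 - e 1 3))

/-- Orthogonal projection onto `span{e^{00}}`. -/
def L1 : Matrix (Q × Q) (Q × Q) ℂ := outer (e 0 0)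

/-- Orthogonal projection onto `span{e^{0j}+e^{j0} : j=1,2,3}`. -/
def L3p : Matrix (Q × Q) (Q × Q) ℂ :=
  (1 / 2 : ℂ) • (outer (e 0 1 + e 1 0) + outer (e 0 2 + e 2 0) + outer (e 0 3 + e 3 0))

/-- Orthogonal projection onto `span{e^{0j}−e^{j0} : j=1,2,3}`. -/
def L3m : Matrix (Q × Q) (Q × Q) ℂ :=
  (1 / 2 : ℂ) • (outer (e 0 1 - e 1 0) + outer (e 0 2 - e 2 0) + outer (e 0 3 - e 3 0))

/-- The matrix elements `x_{jk} = ⟨φʲ, σ φᵏ⟩` of a state `σ` in the Bell basis. -/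
def x (σ : Matrix Q Q ℂ) (j k : Fin 4) : ℂ := star (bell j) ⬝ᵥ σ.mulVec (bell k)

lemma trace_mul_outer {m : Type*} [Fintype m] [DecidableEq m]
    (M : Matrix m m ℂ) (v : m → ℂ) :
    (M * outer v).trace = star v ⬝ᵥ M.mulVec v := by
  simp only [trace, Matrix.mul_apply, outer, vecMulVec_apply, dotProduct, mulVec,
    diag_apply, Pi.star_apply, Finset.mul_sum, Finset.sum_mul]
  congr 1; ext p; congr 1; ext q; ring

lemma dot_kron {n m : Type*} [Fintype n] [Fintype m]
    (a c : n → ℂ) (b d : m → ℂ) (σ : Matrix n n ℂ) (τ : Matrix m m ℂ) :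
    star (fun pq : n × m => a pq.1 * b pq.2) ⬝ᵥ
      (σ ⊗ₖ τ).mulVec (fun pq : n × m => c pq.1 * d pq.2)
    = (star a ⬝ᵥ σ.mulVec c) * (star b ⬝ᵥ τ.mulVec d) := by
  simp only [dotProduct, mulVec, kroneckerMap_apply, Pi.star_apply, star_mul',
    Fintype.sum_prod_type]
  rw [Finset.sum_mul_sum]
  refine Finset.sum_congr rfl fun p1 _ => Finset.sum_congr rfl fun p2 _ => ?_
  conv_rhs => rw [mul_mul_mul_comm, Finset.sum_mul_sum]
  congr 1
  exact Finset.sum_congr rfl fun q1 _ => Finset.sum_congr rfl fun q2 _ => by ring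

lemma dot_e (σ : Matrix Q Q ℂ) (j k l m : Fin 4) :
    star (e j k) ⬝ᵥ (σ ⊗ₖ σ).mulVec (e l m) = x σ j l * x σ k m := by
  have h := dot_kron (bell j) (bell l) (bell k) (bell m) σ σ
  unfold e x
  convert h using 2

lemma x_star (σ : Matrix Q Q ℂ) (hσ : σ.IsHermitian) (j k : Fin 4) :
    star (x σ j k) = x σ k j := by
  unfold x
  simp only [dotProduct, mulVec, star_sum, star_mul', star_star, Pi.star_apply,
    Finset.mul_sum]
  rw [Finset.sum_comm]
  refine Finset.sum_congr rfl fun q _ => Finset.sum_congr rfl fun p _ => ?_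
  rw [show star (σ p q) = σ q p from (hσ.apply q p).symm ▸ rfl]
  ring

/-- `Tr((σ⊗σ) L₃⁻) = Σ_{j=1}^3 (x₀₀ x_{jj} − |x₀ⱼ|²)`. -/
theorem stmt11 (σ : Matrix Q Q ℂ) (hσ : σ.PosSemidef) (htr : σ.trace = 1) :
    ((σ ⊗ₖ σ) * L3m).trace =
      (x σ 0 0 * x σ 1 1 - ((‖x σ 0 1‖ : ℂ)) ^ 2) +
      (x σ 0 0 * x σ 2 2 - ((‖x σ 0 2‖ : ℂ)) ^ 2) +
      (x σ 0 0 * x σ 3 3 - ((‖x σ 0 3‖ : ℂ)) ^ 2) := by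
  have hx : ∀ j : Fin 4, star (x σ 0 j) = x σ j 0 := fun j => x_star σ hσ.1 0 j
  have hnorm : ∀ j : Fin 4, ((‖x σ 0 j‖ : ℂ)) ^ 2 = x σ 0 j * x σ j 0 := by
    intro j
    rw [← hx j, Complex.star_def, Complex.mul_conj, Complex.normSq_eq_norm_sq]
    push_cast
    ring
  have hterm : ∀ j : Fin 4, ((σ ⊗ₖ σ) * outer (e 0 j - e j 0)).trace
      = x σ 0 0 * x σ j j - x σ 0 j * x σ j 0 - x σ j 0 * x σ 0 j
        + x σ j j * x σ 0 0 := by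
    intro j
    rw [trace_mul_outer, star_sub, mulVec_sub, sub_dotProduct, dotProduct_sub,
      dotProduct_sub, dot_e, dot_e, dot_e, dot_e]
    ring
  unfold L3m
  rw [Matrix.mul_smul, trace_smul, Matrix.mul_add, Matrix.mul_add, trace_add, trace_add,
    hterm 1, hterm 2, hterm 3, hnorm 1, hnorm 2, hnorm 3]
  simp only [smul_eq_mul]
  ring
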